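/- Let $g$ be an impact graph with positive probability for a max-linear Bayesian network with Kleene star $C^\ast$. If $j\to i\in g$, then for every $k\in V$, the edge $i\to k$ is not in $g$. Consequently, every tree in the forest $g$ has height at most one, i.e., $g$ is a galaxy (a forest of stars). -/

import Mathlib

open scoped NNReal

noncomputable section

open MeasureTheory ProbabilityTheory

/-- Max-times matrix-vector product: `(A ⊙ x) i = max_j (A i j * x j)`. -/
def maxMul {d : ℕ} (A : Matrix (Fin d) (Fin d) ℝ≥0) (x : Fin d → ℝ≥0) : Fin d → ℝ≥0 :=
  fun i => Finset.univ.sup fun j => A i j * x j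

/-- Max-times matrix product. -/
def maxMatMul {d : ℕ} (A B : Matrix (Fin d) (Fin d) ℝ≥0) : Matrix (Fin d) (Fin d) ℝ≥0 :=
  Matrix.of fun i j => Finset.univ.sup fun l => A i l * B l j

/-- Max-times matrix powers, with `A^{⊙0}` the identity matrix. -/
def maxPow {d : ℕ} (A : Matrix (Fin d) (Fin d) ℝ≥0) : ℕ → Matrix (Fin d) (Fin d) ℝ≥0
  | 0 => Matrix.of fun i j => if i = j then 1 else 0
  | k + 1 => maxMatMul A (maxPow A k)

/-- Kleene star `C^* = I ∨ C ∨ C^{⊙2} ∨ ⋯ ∨ C^{⊙(d-1)}` over the max-times semiring. -/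
def kleene {d : ℕ} (C : Matrix (Fin d) (Fin d) ℝ≥0) : Matrix (Fin d) (Fin d) ℝ≥0 :=
  Matrix.of fun i j => (Finset.range d).sup fun k => maxPow C k i j

/-- The support digraph of `C` (edge `j → i` iff `C i j ≠ 0`) has no directed cycle. -/
def SupportAcyclic {d : ℕ} (C : Matrix (Fin d) (Fin d) ℝ≥0) : Prop :=
  ¬ ∃ (r : ℕ) (c : Fin (r + 1) → Fin d), Function.Injective c ∧ ∀ t, C (c (t + 1)) (c t) ≠ 0

/-- Edge `j → i` of the impact graph of the innovation vector `z`: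
`i ≠ j` and `X i = c^*_{ij} * z j`, where `X = C^* ⊙ z`. -/
def impactEdge {d : ℕ} (C : Matrix (Fin d) (Fin d) ℝ≥0) (z : Fin d → ℝ≥0) (i j : Fin d) : Prop :=
  i ≠ j ∧ maxMul (kleene C) z i = kleene C i j * z j

lemma maxPow_comp {d : ℕ} (C : Matrix (Fin d) (Fin d) ℝ≥0) (a b : ℕ) (i l j : Fin d) :
    maxPow C a i l * maxPow C b l j ≤ maxPow C (a + b) i j := by
  induction a generalizing i with
  | zero =>
    by_cases h : i = l
    · subst h; simp [maxPow]
    · simp [maxPow, Matrix.of_apply, h]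
  | succ a ih =>
    have hd : (Finset.univ : Finset (Fin d)).Nonempty := ⟨i, Finset.mem_univ i⟩
    obtain ⟨m, -, hm⟩ := Finset.exists_mem_eq_sup Finset.univ hd
      (fun m => C i m * maxPow C a m l)
    have h1 : maxPow C (a + 1) i l = C i m * maxPow C a m l := hm
    have h2 : a + 1 + b = (a + b) + 1 := by omega
    rw [h1, h2]
    calc C i m * maxPow C a m l * maxPow C b l j
        = C i m * (maxPow C a m l * maxPow C b l j) := by ring
      _ ≤ C i m * maxPow C (a + b) m j := by exact mul_le_mul_right (ih m) _
      _ ≤ maxPow C ((a + b) + 1) i j :=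
          Finset.le_sup (f := fun l : Fin d => C i l * maxPow C (a + b) l j) (Finset.mem_univ m)

lemma exists_walk {d : ℕ} (C : Matrix (Fin d) (Fin d) ℝ≥0) {m : ℕ} {i j : Fin d}
    (h : maxPow C m i j ≠ 0) :
    ∃ p : ℕ → Fin d, p 0 = j ∧ p m = i ∧ ∀ t < m, C (p (t + 1)) (p t) ≠ 0 := by
  induction m generalizing i with
  | zero =>
    have hij : i = j := by
      by_contra hij; exact h (by simp [maxPow, Matrix.of_apply, hij])
    exact ⟨fun _ => j, rfl, by simp [hij], fun t ht => absurd ht (by omega)⟩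
  | succ m ih =>
    have : ∃ l, C i l * maxPow C m l j ≠ 0 := by
      by_contra hall
      push_neg at hall
      apply h
      have : maxPow C (m + 1) i j = Finset.univ.sup fun l => C i l * maxPow C m l j := rfl
      rw [this]
      exact le_antisymm (Finset.sup_le fun l _ => le_of_eq (hall l)) zero_le
    obtain ⟨l, hl⟩ := this
    have hC1 : C i l ≠ 0 := fun h0 => hl (by simp [h0])
    have hC2 : maxPow C m l j ≠ 0 := fun h0 => hl (by simp [h0])
    obtain ⟨p, hp0, hpm, hpe⟩ := ih hC2
    refine ⟨fun t => if t = m + 1 then i else p t, by simp [hp0], by simp, ?_⟩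
    intro t ht
    by_cases htm : t = m
    · subst htm
      simp only [if_pos rfl, if_neg (by omega : ¬ t = t + 1)]
      rw [hpm]; exact hC1
    · have h1 : ¬ (t + 1 = m + 1) := by omega
      have h2 : ¬ (t = m + 1) := by omega
      simp only [if_neg h1, if_neg h2]
      exact hpe t (by omega)

lemma maxPow_eq_zero {d : ℕ} (C : Matrix (Fin d) (Fin d) ℝ≥0) (hC : SupportAcyclic C)
    {m : ℕ} (hm : d ≤ m) (i j : Fin d) : maxPow C m i j = 0 := by
  by_contra h
  obtain ⟨p, hp0, hpm, hpe⟩ := exists_walk C h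
  have hd : 0 < d := i.pos
  have hni : ¬ Function.Injective (fun t : Fin (m + 1) => p t) := by
    intro hinj
    have := Fintype.card_le_of_injective _ hinj
    simp only [Fintype.card_fin] at this
    omega
  have hex : ∃ n, 0 < n ∧ ∃ s, s + n ≤ m ∧ p s = p (s + n) := by
    rw [Function.not_injective_iff] at hni
    obtain ⟨a, b, hab, hne⟩ := hni
    rcases lt_or_gt_of_ne (fun h => hne (Fin.ext h) : (a : ℕ) ≠ b) with hlt | hlt
    · exact ⟨b - a, by omega, a, by omega, by rw [hab]; congr 1; omega⟩
    · exact ⟨a - b, by omega, b, by omega, by rw [← hab]; congr 1; omega⟩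
  classical
  set n₀ := Nat.find hex with hn₀
  obtain ⟨hn₀pos, s, hsm, hps⟩ := Nat.find_spec hex
  obtain ⟨r, hr⟩ : ∃ r, n₀ = r + 1 := ⟨n₀ - 1, by omega⟩
  apply hC
  refine ⟨r, fun u => p (s + u.val), ?_, ?_⟩
  · intro u v huv
    by_contra hne
    have hne' : (u : ℕ) ≠ v := fun h => hne (Fin.ext h)
    have key : ∀ (x y : Fin (r + 1)), (x : ℕ) < y → p (s + x.val) = p (s + y.val) → False := by
      intro x y hxy heq
      have hy : (y : ℕ) ≤ r := by omega
      have : 0 < (y : ℕ) - x ∧ ∃ s', s' + ((y : ℕ) - x) ≤ m ∧ p s' = p (s' + ((y : ℕ) - x)) := by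
        refine ⟨by omega, s + x, by omega, ?_⟩
        rw [heq]; congr 1; omega
      have := Nat.find_min hex (m := (y : ℕ) - (x : ℕ)) (by omega) this
      exact this
    rcases lt_or_gt_of_ne hne' with hlt | hlt
    · exact key u v hlt huv
    · exact key v u hlt huv.symm
  · intro u
    by_cases hur : (u : ℕ) < r
    · have h1 : ((u + 1 : Fin (r + 1)) : ℕ) = u + 1 := by
        rw [Fin.val_add_one]
        rw [if_neg (by intro h; rw [h] at hur; simp [Fin.last] at hur)]
      show C (p (s + ((u + 1 : Fin (r + 1)) : ℕ))) (p (s + (u : ℕ))) ≠ 0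
      rw [h1]
      have : s + (u : ℕ) + 1 = s + ((u : ℕ) + 1) := by omega
      rw [← this]
      exact hpe (s + u) (by omega)
    · have hu : (u : ℕ) = r := by omega
      have hul : u = Fin.last r := Fin.ext (by simp [Fin.last, hu])
      have h1 : ((u + 1 : Fin (r + 1)) : ℕ) = 0 := by
        rw [Fin.val_add_one, if_pos hul]
      show C (p (s + ((u + 1 : Fin (r + 1)) : ℕ))) (p (s + (u : ℕ))) ≠ 0
      rw [h1, hu]
      simp only [add_zero]
      have hfind : Nat.find hex = r + 1 := hr
      rw [hps, hfind]
      have : s + (r + 1) = s + r + 1 := by omega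
      rw [this]
      exact hpe (s + r) (by omega)

lemma maxPow_le_kleene {d : ℕ} (C : Matrix (Fin d) (Fin d) ℝ≥0) (hC : SupportAcyclic C)
    (m : ℕ) (i j : Fin d) : maxPow C m i j ≤ kleene C i j := by
  by_cases h : m < d
  · exact Finset.le_sup (f := fun k => maxPow C k i j) (Finset.mem_range.2 h)
  · rw [maxPow_eq_zero C hC (by omega)]; exact zero_le

lemma kleene_diag {d : ℕ} (C : Matrix (Fin d) (Fin d) ℝ≥0) (i : Fin d) :
    1 ≤ kleene C i i := by
  have h0 : maxPow C 0 i i = 1 := by simp [maxPow]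
  calc (1 : ℝ≥0) = maxPow C 0 i i := h0.symm
    _ ≤ kleene C i i := Finset.le_sup (f := fun k => maxPow C k i i) (Finset.mem_range.2 i.pos)

lemma kleene_idem {d : ℕ} (C : Matrix (Fin d) (Fin d) ℝ≥0) (hC : SupportAcyclic C)
    (k i j : Fin d) : kleene C k i * kleene C i j ≤ kleene C k j := by
  have hne : (Finset.range d).Nonempty := ⟨0, Finset.mem_range.2 i.pos⟩
  obtain ⟨a, -, ha⟩ := Finset.exists_mem_eq_sup _ hne (fun n => maxPow C n k i)
  obtain ⟨b, -, hb⟩ := Finset.exists_mem_eq_sup _ hne (fun n => maxPow C n i j)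
  have h1 : kleene C k i = maxPow C a k i := ha
  have h2 : kleene C i j = maxPow C b i j := hb
  rw [h1, h2]
  exact le_trans (maxPow_comp C a b k i j) (maxPow_le_kleene C hC _ k j)

lemma le_maxMul {d : ℕ} (C : Matrix (Fin d) (Fin d) ℝ≥0) (z : Fin d → ℝ≥0) (i j : Fin d) :
    kleene C i j * z j ≤ maxMul (kleene C) z i :=
  Finset.le_sup (f := fun l => kleene C i l * z l) (Finset.mem_univ j)

lemma null_line {d : ℕ} {Ω : Type*} [MeasurableSpace Ω] (μ : Measure Ω) [IsProbabilityMeasure μ]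
    (Z : Fin d → Ω → ℝ≥0) (hmeas : ∀ i, Measurable (Z i))
    (hindep : iIndepFun Z μ)
    (hatom : ∀ i (c : ℝ≥0), μ {ω | Z i ω = c} = 0)
    {i j : Fin d} (hij : i ≠ j) (c : ℝ≥0) :
    μ {ω | Z i ω = c * Z j ω} = 0 := by
  have hind : IndepFun (Z j) (Z i) μ := hindep.indepFun hij.symm
  have hmap := (indepFun_iff_map_prod_eq_prod_map_map (hmeas j).aemeasurable
    (hmeas i).aemeasurable).mp hind
  have hS : MeasurableSet {p : ℝ≥0 × ℝ≥0 | p.2 = c * p.1} :=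
    (isClosed_eq continuous_snd (continuous_const.mul continuous_fst)).measurableSet
  have hset : {ω | Z i ω = c * Z j ω}
      = (fun ω => (Z j ω, Z i ω)) ⁻¹' {p : ℝ≥0 × ℝ≥0 | p.2 = c * p.1} := rfl
  rw [hset, ← Measure.map_apply ((hmeas j).prodMk (hmeas i)) hS, hmap,
    Measure.prod_apply hS]
  have hzero : ∀ x : ℝ≥0, (μ.map (Z i)) (Prod.mk x ⁻¹' {p : ℝ≥0 × ℝ≥0 | p.2 = c * p.1}) = 0 := by
    intro x
    have h1 : (Prod.mk x ⁻¹' {p : ℝ≥0 × ℝ≥0 | p.2 = c * p.1}) = {c * x} := by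
      ext y; simp [Set.mem_preimage]
    rw [h1, Measure.map_apply (hmeas i) (measurableSet_singleton _)]
    exact hatom i (c * x)
  simp only [hzero]
  simp

/-- If `g` is an impact graph with positive probability, then `j → i ∈ g` implies that
no edge `i → k` is in `g`: every tree of the forest `g` has height at most one
(`g` is a galaxy). Here the edge `j → i` of `g` is encoded as `g i j`. -/
theorem stmt7 {d : ℕ} (C : Matrix (Fin d) (Fin d) ℝ≥0) (hC : SupportAcyclic C)
    {Ω : Type*} [MeasurableSpace Ω] (μ : Measure Ω) [IsProbabilityMeasure μ]
    (Z : Fin d → Ω → ℝ≥0) (hmeas : ∀ i, Measurable (Z i))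
    (hindep : iIndepFun Z μ)
    (hpos : ∀ i ω, 0 < Z i ω)
    (hatom : ∀ i (c : ℝ≥0), μ {ω | Z i ω = c} = 0)
    (g : Fin d → Fin d → Prop)
    (hg : μ {ω | ∀ i j, impactEdge C (fun k => Z k ω) i j ↔ g i j} ≠ 0) :
    ∀ i j, g i j → ∀ k, ¬ g k i := by
  intro i j hgij k hgki
  set A := {ω | ∀ i j, impactEdge C (fun k => Z k ω) i j ↔ g i j} with hA
  -- A is nonempty
  have hAne : A.Nonempty := by
    rw [Set.nonempty_iff_ne_empty]
    intro h; rw [hA] at hg; rw [← hA, h] at hg; simp at hg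
  obtain ⟨ω₀, hω₀⟩ := hAne
  have hij : i ≠ j := ((hω₀ i j).mpr hgij).1
  have hsub : A ⊆ {ω | Z i ω = kleene C i j * Z j ω} := by
    intro ω hω
    obtain ⟨-, hXi⟩ := (hω i j).mpr hgij
    obtain ⟨hki, hXk⟩ := (hω k i).mpr hgki
    have hle : Z i ω ≤ kleene C i j * Z j ω := by
      rw [← hXi]
      calc Z i ω = 1 * Z i ω := (one_mul _).symm
        _ ≤ kleene C i i * Z i ω := mul_le_mul_left (kleene_diag C i) _
        _ ≤ maxMul (kleene C) (fun l => Z l ω) i := le_maxMul C (fun l => Z l ω) i i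
    rcases eq_or_lt_of_le hle with heq | hlt
    · exact heq
    · exfalso
      have hkipos : 0 < kleene C k i := by
        rcases (zero_le : (0:ℝ≥0) ≤ kleene C k i).lt_or_eq with h | h
        · exact h
        · exfalso
          have hXkpos : 0 < maxMul (kleene C) (fun l => Z l ω) k := by
            calc (0 : ℝ≥0) < Z k ω := hpos k ω
              _ = 1 * Z k ω := (one_mul _).symm
              _ ≤ kleene C k k * Z k ω := mul_le_mul_left (kleene_diag C k) _
              _ ≤ maxMul (kleene C) (fun l => Z l ω) k := le_maxMul C (fun l => Z l ω) k k
          rw [hXk, ← h, zero_mul] at hXkpos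
          exact lt_irrefl _ hXkpos
      have h1 : kleene C k i * Z i ω < kleene C k i * (kleene C i j * Z j ω) :=
        mul_lt_mul_of_pos_left hlt hkipos
      have h2 : kleene C k i * (kleene C i j * Z j ω) ≤ kleene C k j * Z j ω := by
        rw [← mul_assoc]
        exact mul_le_mul_left (kleene_idem C hC k i j) _
      have h3 : kleene C k j * Z j ω ≤ maxMul (kleene C) (fun l => Z l ω) k :=
        le_maxMul C (fun l => Z l ω) k j
      rw [hXk] at h3
      exact lt_irrefl _ (lt_of_lt_of_le h1 (le_trans h2 h3))
  have : μ A ≤ μ {ω | Z i ω = kleene C i j * Z j ω} := measure_mono hsub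
  rw [null_line μ Z hmeas hindep hatom hij (kleene C i j)] at this
  exact hg (le_antisymm this zero_le)


end
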